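/- Let A be a complex n×n H-matrix, and let M and F be complex n×n matrices satisfying ⟨M⟩ − |M − A| = ⟨A⟩ and ⟨F⟩ − |F − A| = ⟨A⟩. Then the 2n×2n block matrix Â = [[M, A − M], [A − F, F]] is an H-matrix. -/

import Mathlib

open Matrix

/-- Spectral radius of a real square matrix: the supremum of the moduli of its
complex eigenvalues. -/
noncomputable def specRad {m : Type*} [Fintype m] [DecidableEq m]
    (A : Matrix m m ℝ) : ℝ :=
  sSup ((fun z : ℂ => ‖z‖) '' spectrum ℂ (A.map Complex.ofReal))

/-- Entrywise absolute value (modulus) of a complex matrix. -/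
noncomputable def cabs {m l : Type*} (A : Matrix m l ℂ) : Matrix m l ℝ :=
  fun i j => ‖A i j‖

/-- Comparison matrix of a complex square matrix. -/
noncomputable def compMat {m : Type*} [DecidableEq m]
    (A : Matrix m m ℂ) : Matrix m m ℝ :=
  fun i j => if i = j then ‖A i j‖ else -‖A i j‖

/-- M-matrix: there is `α` with `α I - A ≥ 0` entrywise and `α > ρ(α I - A)`. -/
def IsMMat {m : Type*} [Fintype m] [DecidableEq m]
    (A : Matrix m m ℝ) : Prop :=
  ∃ α : ℝ, (∀ i j, 0 ≤ (α • (1 : Matrix m m ℝ) - A) i j) ∧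
    specRad (α • (1 : Matrix m m ℝ) - A) < α

/-- H-matrix: a complex square matrix whose comparison matrix is an M-matrix. -/
def IsHMat {m : Type*} [Fintype m] [DecidableEq m]
    (A : Matrix m m ℂ) : Prop :=
  IsMMat (compMat A)

open Filter
open scoped ENNReal NNReal

section Aux
variable {m : Type*} [Fintype m] [DecidableEq m]

lemma mem_spec_iff (P : Matrix m m ℂ) (μ : ℂ) :
    μ ∈ spectrum ℂ P ↔ ∃ w : m → ℂ, w ≠ 0 ∧ P.mulVec w = μ • w := by
  rw [spectrum.mem_iff, Algebra.algebraMap_eq_smul_one, Matrix.isUnit_iff_isUnit_det,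
    isUnit_iff_ne_zero, not_ne_iff, ← Matrix.exists_mulVec_eq_zero_iff]
  constructor
  · rintro ⟨v, hv, h⟩
    refine ⟨v, hv, ?_⟩
    rw [sub_mulVec, smul_mulVec, one_mulVec, sub_eq_zero] at h
    exact h.symm
  · rintro ⟨w, hw, h⟩
    refine ⟨w, hw, ?_⟩
    rw [sub_mulVec, smul_mulVec, one_mulVec, sub_eq_zero, h]

lemma abs_le_specRad {P : Matrix m m ℝ} {μ : ℂ}
    (h : μ ∈ spectrum ℂ (P.map Complex.ofReal)) : ‖μ‖ ≤ specRad P :=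
  le_csSup (((Matrix.finite_spectrum _).image _).bddAbove) ⟨μ, h, rfl⟩

lemma specRad_nonneg (P : Matrix m m ℝ) : 0 ≤ specRad P :=
  Real.sSup_nonneg (by rintro x ⟨μ, _, rfl⟩; exact norm_nonneg _)

lemma specRad_lt_of {P : Matrix m m ℝ} {β : ℝ} (hβ : 0 < β)
    (h : ∀ μ ∈ spectrum ℂ (P.map Complex.ofReal), ‖μ‖ < β) : specRad P < β := by
  have hfin : ((fun z : ℂ => ‖z‖) '' spectrum ℂ (P.map Complex.ofReal)).Finite :=
    (Matrix.finite_spectrum _).image _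
  rcases ((fun z : ℂ => ‖z‖) '' spectrum ℂ (P.map Complex.ofReal)).eq_empty_or_nonempty
    with he | hne
  · rw [specRad, he, Real.sSup_empty]; exact hβ
  · obtain ⟨μ, hμ, hEq⟩ := hne.csSup_mem hfin
    rw [specRad, ← hEq]
    exact h μ hμ

attribute [local instance] Matrix.linftyOpNormedRing Matrix.linftyOpNormedAlgebra

lemma not_mmat_vec (Q : Matrix m m ℝ) (hQ : IsMMat Q)
    {r : m → ℝ} (hr : ∀ i, 0 ≤ r i) {i0 : m} (hi0 : 0 < r i0)
    (h : ∀ i, Q.mulVec r i ≤ 0) : False := by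
  obtain ⟨α, hα1, hα2⟩ := hQ
  haveI : Nonempty m := ⟨i0⟩
  set D : Matrix m m ℝ := α • (1 : Matrix m m ℝ) - Q with hD
  have hDnn : ∀ i j, 0 ≤ D i j := hα1
  have hα0 : 0 < α := lt_of_le_of_lt (specRad_nonneg D) hα2
  have hDr : ∀ i, α * r i ≤ D.mulVec r i := by
    intro i
    have h1 : D.mulVec r i = α * r i - Q.mulVec r i := by
      rw [hD, sub_mulVec, smul_mulVec, one_mulVec]
      simp
    rw [h1]
    nlinarith [h i]
  have hpow_nn : ∀ k : ℕ, ∀ i j, 0 ≤ (D ^ k) i j := by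
    intro k
    induction k with
    | zero => intro i j; rw [pow_zero]; by_cases hij : i = j <;> simp [Matrix.one_apply, hij]
    | succ k ih =>
      intro i j
      rw [pow_succ, Matrix.mul_apply]
      exact Finset.sum_nonneg fun l _ => mul_nonneg (ih i l) (hDnn l j)
  have hpowr : ∀ k : ℕ, ∀ i, α ^ k * r i ≤ (D ^ k).mulVec r i := by
    intro k
    induction k with
    | zero => intro i; simp [one_mulVec]
    | succ k ih =>
      intro i
      have h1 : (D ^ (k + 1)).mulVec r = D.mulVec ((D ^ k).mulVec r) := by
        rw [pow_succ', ← mulVec_mulVec]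
      rw [h1]
      have h2 : D.mulVec (α ^ k • r) i ≤ D.mulVec ((D ^ k).mulVec r) i := by
        simp only [mulVec, dotProduct]
        refine Finset.sum_le_sum fun j _ =>
          mul_le_mul_of_nonneg_left ?_ (hDnn i j)
        exact ih j
      rw [mulVec_smul] at h2
      simp only [Pi.smul_apply, smul_eq_mul] at h2
      calc α ^ (k + 1) * r i = α ^ k * (α * r i) := by ring
        _ ≤ α ^ k * D.mulVec r i :=
            mul_le_mul_of_nonneg_left (hDr i) (pow_nonneg hα0.le k)
        _ ≤ _ := h2
  set Dc : Matrix m m ℂ := D.map Complex.ofReal with hDc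
  have hDc_pow : ∀ k : ℕ, Dc ^ k = (D ^ k).map Complex.ofReal := by
    intro k
    have h1 : ∀ (E : Matrix m m ℝ), E.map Complex.ofReal =
        (Complex.ofRealHom.mapMatrix : Matrix m m ℝ →+* Matrix m m ℂ) E := fun _ => rfl
    rw [hDc, h1, h1, ← map_pow]
  have hsr : spectralRadius ℂ Dc ≤ ENNReal.ofReal (specRad D) := by
    rw [spectralRadius]
    refine iSup₂_le fun μ hμ => ?_
    rw [← enorm_eq_nnnorm, ← ofReal_norm]
    refine ENNReal.ofReal_le_ofReal ?_
    simpa using abs_le_specRad (P := D) hμ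
  set c : ℝ := (specRad D + α) / 2 with hc
  have hc0 : 0 < c := by have := specRad_nonneg D; positivity
  have hcα : c < α := by have := hα2; simp only [hc]; linarith
  have h1 : spectralRadius ℂ Dc < ENNReal.ofReal c := by
    refine lt_of_le_of_lt hsr ?_
    rw [ENNReal.ofReal_lt_ofReal_iff hc0]
    simp only [hc]; linarith
  have hG := spectrum.pow_nnnorm_pow_one_div_tendsto_nhds_spectralRadius Dc
  have hev : ∀ᶠ k : ℕ in atTop, (‖Dc ^ k‖₊ : ℝ≥0∞) ^ (1 / (k : ℝ)) < ENNReal.ofReal c :=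
    hG.eventually_lt_const h1
  set rc : m → ℂ := fun i => (r i : ℂ) with hrc
  have hrcn : 0 < ‖rc‖ := by
    have : ‖rc i0‖ ≤ ‖rc‖ := norm_le_pi_norm rc i0
    have h2 : ‖rc i0‖ = r i0 := by
      simp [hrc, Complex.norm_real, Real.norm_eq_abs, abs_of_nonneg (hr i0)]
    linarith
  have hbound : ∀ k : ℕ, α ^ k * r i0 ≤ ‖Dc ^ k‖ * ‖rc‖ := by
    intro k
    have h2 : ((Dc ^ k).mulVec rc) i0 = (((D ^ k).mulVec r i0 : ℝ) : ℂ) := by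
      rw [hDc_pow]
      exact (RingHom.map_mulVec Complex.ofRealHom (D ^ k) r i0).symm
    have h3 : (D ^ k).mulVec r i0 ≤ ‖(Dc ^ k).mulVec rc i0‖ := by
      rw [h2, Complex.norm_real, Real.norm_eq_abs]
      exact le_abs_self _
    have h4 : ‖(Dc ^ k).mulVec rc i0‖ ≤ ‖(Dc ^ k).mulVec rc‖ := norm_le_pi_norm _ i0
    have h5 : ‖(Dc ^ k).mulVec rc‖ ≤ ‖Dc ^ k‖ * ‖rc‖ := Matrix.linfty_opNorm_mulVec _ _
    have := hpowr k i0
    linarith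
  have hev2 : ∀ᶠ k : ℕ in atTop, ‖rc‖ / r i0 < (α / c) ^ k :=
    (tendsto_pow_atTop_atTop_of_one_lt (by rw [lt_div_iff₀ hc0]; linarith)).eventually_gt_atTop _
  have hev3 : ∀ᶠ k : ℕ in atTop, ‖Dc ^ k‖ < c ^ k := by
    filter_upwards [hev, Filter.eventually_ge_atTop 1] with k hk hk1
    have hk0 : (k : ℝ) ≠ 0 := by positivity
    have h2 : ((‖Dc ^ k‖₊ : ℝ≥0∞) ^ (1 / (k : ℝ))) ^ (k : ℝ) <
        (ENNReal.ofReal c) ^ (k : ℝ) :=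
      ENNReal.rpow_lt_rpow hk (by positivity)
    rw [← ENNReal.rpow_mul, one_div, inv_mul_cancel₀ hk0, ENNReal.rpow_one] at h2
    rw [ENNReal.ofReal_rpow_of_pos hc0] at h2
    rw [← enorm_eq_nnnorm, ← ofReal_norm] at h2
    have h3 := (ENNReal.ofReal_lt_ofReal_iff (by positivity)).mp h2
    rwa [Real.rpow_natCast] at h3
  obtain ⟨k, hk1, hk2⟩ := (hev2.and hev3).exists
  have h6 := hbound k
  have h7 : ‖Dc ^ k‖ * ‖rc‖ ≤ c ^ k * ‖rc‖ :=
    mul_le_mul_of_nonneg_right hk2.le hrcn.le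
  have h8 : α ^ k * r i0 ≤ c ^ k * ‖rc‖ := le_trans h6 h7
  have h9 : (α / c) ^ k ≤ ‖rc‖ / r i0 := by
    rw [div_pow, div_le_div_iff₀ (by positivity) hi0]
    nlinarith
  exact absurd h9 (not_le.mpr hk1)

end Aux

theorem stmt14 {n : ℕ} (A M F : Matrix (Fin n) (Fin n) ℂ)
    (hA : IsHMat A)
    (hM : compMat M - cabs (M - A) = compMat A)
    (hF : compMat F - cabs (F - A) = compMat A) :
    IsHMat (Matrix.fromBlocks M (A - M) (A - F) F) := by
  obtain ⟨α, hα1, hα2⟩ := hA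
  set R : Matrix (Fin n) (Fin n) ℝ := fun i j => ‖M i j - A i j‖ with hRdef
  set S : Matrix (Fin n) (Fin n) ℝ := fun i j => ‖F i j - A i j‖ with hSdef
  have hRnn : ∀ i j, 0 ≤ R i j := fun i j => norm_nonneg _
  have hSnn : ∀ i j, 0 ≤ S i j := fun i j => norm_nonneg _
  have hMij : ∀ i j, compMat M i j - R i j = compMat A i j := by
    intro i j
    have h0 := congrFun (congrFun hM i) j
    simpa [cabs, Matrix.sub_apply, hRdef] using h0
  have hFij : ∀ i j, compMat F i j - S i j = compMat A i j := by
    intro i j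
    have h0 := congrFun (congrFun hF i) j
    simpa [cabs, Matrix.sub_apply, hSdef] using h0
  have hMd : ∀ i, ‖M i i‖ = ‖A i i‖ + R i i := by
    intro i; have h0 := hMij i i; simp only [compMat, eq_self_iff_true, if_true] at h0; linarith
  have hFd : ∀ i, ‖F i i‖ = ‖A i i‖ + S i i := by
    intro i; have h0 := hFij i i; simp only [compMat, eq_self_iff_true, if_true] at h0; linarith
  have hMo : ∀ i j, i ≠ j → ‖M i j‖ + R i j = ‖A i j‖ := by
    intro i j hij; have h0 := hMij i j; simp only [compMat, if_neg hij] at h0; linarith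
  have hFo : ∀ i j, i ≠ j → ‖F i j‖ + S i j = ‖A i j‖ := by
    intro i j hij; have h0 := hFij i j; simp only [compMat, if_neg hij] at h0; linarith
  have hRA : ∀ i j, i ≠ j → R i j ≤ ‖A i j‖ := by
    intro i j hij
    have := hMo i j hij
    have h0 : 0 ≤ ‖M i j‖ := norm_nonneg _
    linarith
  have hSA : ∀ i j, i ≠ j → S i j ≤ ‖A i j‖ := by
    intro i j hij
    have := hFo i j hij
    have h0 : 0 ≤ ‖F i j‖ := norm_nonneg _
    linarith
  have hαA : ∀ i, ‖A i i‖ ≤ α := by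
    intro i
    have h0 := hα1 i i
    simp only [Matrix.sub_apply, Matrix.smul_apply, Matrix.one_apply_eq, compMat,
      eq_self_iff_true, if_true, smul_eq_mul, mul_one] at h0
    linarith
  set β : ℝ := α + ∑ i, (R i i + S i i) with hβdef
  have hβα : α ≤ β := by
    rw [hβdef]
    have : (0 : ℝ) ≤ ∑ i, (R i i + S i i) :=
      Finset.sum_nonneg fun i _ => add_nonneg (hRnn i i) (hSnn i i)
    linarith
  have hα0 : 0 < α := lt_of_le_of_lt (specRad_nonneg _) hα2
  have hβ0 : 0 < β := lt_of_lt_of_le hα0 hβα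
  have hdiagβ : ∀ i, ‖A i i‖ + R i i + S i i ≤ β := by
    intro i
    have h0 : R i i + S i i ≤ ∑ j, (R j j + S j j) :=
      Finset.single_le_sum (f := fun j => R j j + S j j)
        (fun j _ => add_nonneg (hRnn j j) (hSnn j j)) (Finset.mem_univ i)
    have h1 := hαA i
    rw [hβdef]; linarith
  set B : Matrix (Fin n) (Fin n) ℝ :=
    fun i j => if i = j then β - ‖A i j‖ else ‖A i j‖ with hBdef
  have hBnn : ∀ i j, 0 ≤ B i j := by
    intro i j
    rw [hBdef]
    by_cases hij : i = j
    · subst hij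
      simp only [eq_self_iff_true, if_true]
      have := hdiagβ i; have := hRnn i i; have := hSnn i i
      linarith
    · simp only [if_neg hij]
      exact norm_nonneg _
  -- entries of the shifted comparison matrix of the block matrix
  set bigM := Matrix.fromBlocks M (A - M) (A - F) F with hbigM
  set P : Matrix (Fin n ⊕ Fin n) (Fin n ⊕ Fin n) ℝ :=
    β • (1 : Matrix (Fin n ⊕ Fin n) (Fin n ⊕ Fin n) ℝ) - compMat bigM with hPdef
  have hP11 : ∀ i j, P (Sum.inl i) (Sum.inl j) = B i j - R i j := by
    intro i j
    by_cases hij : i = j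
    · subst hij
      simp only [hPdef, Matrix.sub_apply, Matrix.smul_apply, Matrix.one_apply_eq,
        compMat, hbigM, Matrix.fromBlocks_apply₁₁, eq_self_iff_true, if_true,
        smul_eq_mul, mul_one, hBdef]
      have := hMd i
      linarith
    · have hij' : (Sum.inl i : Fin n ⊕ Fin n) ≠ Sum.inl j := by simp [hij]
      simp only [hPdef, Matrix.sub_apply, Matrix.smul_apply, Matrix.one_apply_ne hij',
        compMat, hbigM, Matrix.fromBlocks_apply₁₁, if_neg hij', smul_eq_mul, mul_zero,
        hBdef, if_neg hij]
      have := hMo i j hij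
      linarith
  have hP12 : ∀ i j, P (Sum.inl i) (Sum.inr j) = R i j := by
    intro i j
    have hij' : (Sum.inl i : Fin n ⊕ Fin n) ≠ Sum.inr j := by simp
    simp only [hPdef, Matrix.sub_apply, Matrix.smul_apply, Matrix.one_apply_ne hij',
      compMat, hbigM, Matrix.fromBlocks_apply₁₂, if_neg hij', smul_eq_mul, mul_zero,
      hRdef]
    rw [norm_sub_rev]
    ring
  have hP21 : ∀ i j, P (Sum.inr i) (Sum.inl j) = S i j := by
    intro i j
    have hij' : (Sum.inr i : Fin n ⊕ Fin n) ≠ Sum.inl j := by simp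
    simp only [hPdef, Matrix.sub_apply, Matrix.smul_apply, Matrix.one_apply_ne hij',
      compMat, hbigM, Matrix.fromBlocks_apply₂₁, if_neg hij', smul_eq_mul, mul_zero,
      hSdef]
    rw [norm_sub_rev]
    ring
  have hP22 : ∀ i j, P (Sum.inr i) (Sum.inr j) = B i j - S i j := by
    intro i j
    by_cases hij : i = j
    · subst hij
      simp only [hPdef, Matrix.sub_apply, Matrix.smul_apply, Matrix.one_apply_eq,
        compMat, hbigM, Matrix.fromBlocks_apply₂₂, eq_self_iff_true, if_true,
        smul_eq_mul, mul_one, hBdef]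
      have := hFd i
      linarith
    · have hij' : (Sum.inr i : Fin n ⊕ Fin n) ≠ Sum.inr j := by simp [hij]
      simp only [hPdef, Matrix.sub_apply, Matrix.smul_apply, Matrix.one_apply_ne hij',
        compMat, hbigM, Matrix.fromBlocks_apply₂₂, if_neg hij', smul_eq_mul, mul_zero,
        hBdef, if_neg hij]
      have := hFo i j hij
      linarith
  have hBd : ∀ i, B i i = β - ‖A i i‖ := fun i => by simp [hBdef]
  have hBo : ∀ i j, i ≠ j → B i j = ‖A i j‖ := fun i j hij => by
    simp [hBdef, hij]
  refine ⟨β, ?_, ?_⟩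
  · rw [← hPdef]
    rintro (i | i) (j | j)
    · rw [hP11 i j]
      by_cases hij : i = j
      · subst hij
        rw [hBd i]
        have h0 := hdiagβ i; have h1 := hSnn i i
        linarith
      · rw [hBo i j hij]
        have h0 := hRA i j hij
        linarith
    · rw [hP12 i j]; exact hRnn i j
    · rw [hP21 i j]; exact hSnn i j
    · rw [hP22 i j]
      by_cases hij : i = j
      · subst hij
        rw [hBd i]
        have h0 := hdiagβ i; have h1 := hRnn i i
        linarith
      · rw [hBo i j hij]
        have h0 := hSA i j hij
        linarith
  · rw [← hPdef]
    refine specRad_lt_of hβ0 ?_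
    intro μ hμ
    rw [mem_spec_iff] at hμ
    obtain ⟨w, hw0, hweq⟩ := hμ
    set x : Fin n → ℂ := fun i => w (Sum.inl i) with hx
    set y : Fin n → ℂ := fun i => w (Sum.inr i) with hy
    set z : Fin n → ℂ := fun i => y i - x i with hz
    have heq : ∀ p, (∑ q, ((P p q : ℝ) : ℂ) * w q) = μ * w p := by
      intro p
      have h0 := congrFun hweq p
      simpa [Matrix.mulVec, dotProduct, Matrix.map_apply, Pi.smul_apply,
        smul_eq_mul] using h0
    have eq1 : ∀ i, (∑ j, ((B i j : ℝ) : ℂ) * x j) + (∑ j, ((R i j : ℝ) : ℂ) * z j)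
        = μ * x i := by
      intro i
      have h0 := heq (Sum.inl i)
      rw [Fintype.sum_sum_type] at h0
      simp only [hP11, hP12] at h0
      rw [← h0, ← Finset.sum_add_distrib, ← Finset.sum_add_distrib]
      refine Finset.sum_congr rfl fun j _ => ?_
      simp only [hx, hy, hz]
      push_cast
      ring
    have eq2 : ∀ i, (∑ j, ((B i j : ℝ) : ℂ) * y j) - (∑ j, ((S i j : ℝ) : ℂ) * z j)
        = μ * y i := by
      intro i
      have h0 := heq (Sum.inr i)
      rw [Fintype.sum_sum_type] at h0
      simp only [hP21, hP22] at h0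
      rw [← h0, ← Finset.sum_sub_distrib, ← Finset.sum_add_distrib]
      refine Finset.sum_congr rfl fun j _ => ?_
      simp only [hx, hy, hz]
      push_cast
      ring
    have eqz : ∀ i, (∑ j, ((B i j - R i j - S i j : ℝ) : ℂ) * z j) = μ * z i := by
      intro i
      have h1 := eq1 i
      have h2 := eq2 i
      calc ∑ j, ((B i j - R i j - S i j : ℝ) : ℂ) * z j
          = ((∑ j, ((B i j : ℝ) : ℂ) * y j) - (∑ j, ((S i j : ℝ) : ℂ) * z j))
            - ((∑ j, ((B i j : ℝ) : ℂ) * x j) + (∑ j, ((R i j : ℝ) : ℂ) * z j)) := by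
            rw [← Finset.sum_sub_distrib, ← Finset.sum_add_distrib,
              ← Finset.sum_sub_distrib]
            refine Finset.sum_congr rfl fun j _ => ?_
            simp only [hx, hy, hz]
            push_cast
            ring
        _ = μ * y i - μ * x i := by rw [h1, h2]
        _ = μ * z i := by simp only [hz]; ring
    have key : ∀ (H : Matrix (Fin n) (Fin n) ℝ) (v : Fin n → ℂ) (j0 : Fin n),
        v j0 ≠ 0 → (∀ i j, |H i j| ≤ B i j) →
        (∀ i, (∑ j, ((H i j : ℝ) : ℂ) * v j) = μ * v i) → ‖μ‖ < β := by
      intro H v j0 hv0 hHB hHv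
      by_contra hcon
      push_neg at hcon
      refine not_mmat_vec (compMat A) ⟨α, hα1, hα2⟩
        (r := fun i => ‖v i‖) (fun i => norm_nonneg _)
        (i0 := j0) (norm_pos_iff.mpr hv0) ?_
      intro i
      have hb : ‖μ‖ * ‖v i‖ ≤ ∑ j, B i j * ‖v j‖ := by
        have h0 : ‖μ‖ * ‖v i‖
            = ‖∑ j, ((H i j : ℝ) : ℂ) * v j‖ := by
          rw [hHv i, norm_mul]
        rw [h0]
        refine le_trans (norm_sum_le _ _) ?_
        refine Finset.sum_le_sum fun j _ => ?_
        rw [norm_mul, Complex.norm_real, Real.norm_eq_abs]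
        exact mul_le_mul_of_nonneg_right (hHB i j) (norm_nonneg _)
      have hQ : (compMat A).mulVec (fun i => ‖v i‖) i
          = β * ‖v i‖ - ∑ j, B i j * ‖v j‖ := by
        simp only [mulVec, dotProduct]
        have hsplit : ∀ j, compMat A i j = (if i = j then β else 0) - B i j := by
          intro j
          by_cases hij : i = j
          · subst hij
            simp only [compMat, eq_self_iff_true, if_true, hBd i]
            ring
          · simp only [compMat, if_neg hij, hBo i j hij]
            ring
        calc ∑ j, compMat A i j * ‖v j‖
            = ∑ j, ((if i = j then β else 0) * ‖v j‖
                - B i j * ‖v j‖) := by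
              refine Finset.sum_congr rfl fun j _ => ?_
              rw [hsplit j]; ring
          _ = (∑ j, (if i = j then β else 0) * ‖v j‖)
              - ∑ j, B i j * ‖v j‖ := Finset.sum_sub_distrib _ _
          _ = β * ‖v i‖ - ∑ j, B i j * ‖v j‖ := by
              congr 1
              simp [Finset.sum_ite_eq, ite_mul, zero_mul]
      rw [hQ]
      have h1 : (0 : ℝ) ≤ ‖v i‖ := norm_nonneg _
      nlinarith [hb]
    by_cases hz0 : ∀ j, z j = 0
    · obtain ⟨p, hp⟩ := Function.ne_iff.mp hw0
      have hxne : ∃ j0, x j0 ≠ 0 := by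
        rcases p with j | j
        · exact ⟨j, by simpa [hx] using hp⟩
        · refine ⟨j, fun hxj => ?_⟩
          have h0 := hz0 j
          simp only [hz] at h0
          have h1 : y j = x j := by
            have := sub_eq_zero.mp h0
            exact this
          have h2 : y j = 0 := by rw [h1, hxj]
          exact hp (by simpa [hy] using h2)
      obtain ⟨j0, hj0⟩ := hxne
      have hx2 : ∀ i, (∑ j, ((B i j : ℝ) : ℂ) * x j) = μ * x i := by
        intro i
        have h1 := eq1 i
        have h2 : (∑ j, ((R i j : ℝ) : ℂ) * z j) = 0 :=
          Finset.sum_eq_zero fun j _ => by rw [hz0 j, mul_zero]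
        rw [h2, add_zero] at h1
        exact h1
      exact key B x j0 hj0 (fun i j => by rw [abs_of_nonneg (hBnn i j)]) hx2
    · push_neg at hz0
      obtain ⟨j0, hj0⟩ := hz0
      refine key (fun i j => B i j - R i j - S i j) z j0 hj0 ?_ eqz
      intro i j
      show |B i j - R i j - S i j| ≤ B i j
      by_cases hij : i = j
      · subst hij
        have h0 := hdiagβ i
        have h1 := hRnn i i
        have h2 := hSnn i i
        rw [hBd i]
        rw [abs_of_nonneg (by linarith)]
        linarith
      · have h1 := hRA i j hij
        have h2 := hSA i j hij
        have h3 := hRnn i j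
        have h4 := hSnn i j
        rw [hBo i j hij]
        exact abs_le.mpr ⟨by linarith, by linarith⟩
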